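/- If A is an invertible symmetric n×n matrix, B is p×n, D is p×p with m = (D - B A⁻¹ Bᵀ)⁻¹ existing, P ∈ ℝ^{1×n}, k* ∈ ℝ^{1×p}, y ∈ ℝⁿ deterministic, and y* ∈ ℝ^p a random vector whose i-th component equals B A⁻¹ y plus a random vector u with E[|u_i|] = √(2/π)·σ*_i, then E[|P A⁻¹ y - [P, k*] K⁻¹ [y; y*]|] ≤ ‖(P A⁻¹ Bᵀ - k*) m‖_∞ · √(2/π) · Σ_i σ*_i. -/

import Mathlib

open Matrix MeasureTheory

/-- Block inverse identity: the change in the posterior mean equals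
`(P A⁻¹ Bᵀ - k*) (D - B A⁻¹ Bᵀ)⁻¹ u`. -/
lemma gp_mean_change_eq {n p : ℕ}
    (A : Matrix (Fin n) (Fin n) ℝ) (B : Matrix (Fin p) (Fin n) ℝ)
    (D : Matrix (Fin p) (Fin p) ℝ)
    (P : Matrix (Fin 1) (Fin n) ℝ) (kst : Matrix (Fin 1) (Fin p) ℝ)
    (y : Matrix (Fin n) (Fin 1) ℝ) (u : Matrix (Fin p) (Fin 1) ℝ)
    (hA : IsUnit A.det)
    (hSchur : IsUnit (D - B * A⁻¹ * Bᵀ).det) :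
    P * A⁻¹ * y -
        Matrix.fromCols P kst * (Matrix.fromBlocks A Bᵀ B D)⁻¹ *
          Matrix.fromRows y (B * A⁻¹ * y + u) =
      (P * A⁻¹ * Bᵀ - kst) * (D - B * A⁻¹ * Bᵀ)⁻¹ * u := by
  letI iA : Invertible A := A.invertibleOfIsUnitDet hA
  letI iS : Invertible (D - B * A⁻¹ * Bᵀ) :=
    (D - B * A⁻¹ * Bᵀ).invertibleOfIsUnitDet hSchur
  have hSA : D - B * ⅟A * Bᵀ = D - B * A⁻¹ * Bᵀ := by
    rw [invOf_eq_nonsing_inv]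
  letI iS' : Invertible (D - B * ⅟A * Bᵀ) := hSA ▸ iS
  letI iK : Invertible (Matrix.fromBlocks A Bᵀ B D) :=
    Matrix.fromBlocks₁₁Invertible A Bᵀ B D
  have hKinv : (Matrix.fromBlocks A Bᵀ B D)⁻¹ =
      Matrix.fromBlocks
        (A⁻¹ + A⁻¹ * Bᵀ * (D - B * A⁻¹ * Bᵀ)⁻¹ * B * A⁻¹)
        (-(A⁻¹ * Bᵀ * (D - B * A⁻¹ * Bᵀ)⁻¹))
        (-((D - B * A⁻¹ * Bᵀ)⁻¹ * B * A⁻¹))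
        ((D - B * A⁻¹ * Bᵀ)⁻¹) := by
    rw [← invOf_eq_nonsing_inv, Matrix.invOf_fromBlocks₁₁_eq]
    congr 1
  set S := (D - B * A⁻¹ * Bᵀ)⁻¹ with hS
  rw [hKinv, Matrix.fromCols_mul_fromBlocks, Matrix.fromCols_mul_fromRows]
  simp only [Matrix.mul_add, Matrix.add_mul, Matrix.sub_mul, Matrix.mul_neg,
    Matrix.neg_mul, Matrix.mul_assoc]
  abel

/-- Paper's Theorem 2: expected absolute change of the GP posterior mean is bounded by
`‖(P A⁻¹ Bᵀ - k*) m‖_∞ · √(2/π) · Σ_i σ*_i`. -/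
theorem expected_mean_change_bound {n p : ℕ} (hp : 0 < p)
    {Ω : Type*} [MeasureSpace Ω] [IsProbabilityMeasure (volume : Measure Ω)]
    (A : Matrix (Fin n) (Fin n) ℝ) (B : Matrix (Fin p) (Fin n) ℝ)
    (D : Matrix (Fin p) (Fin p) ℝ)
    (P : Matrix (Fin 1) (Fin n) ℝ) (kst : Matrix (Fin 1) (Fin p) ℝ)
    (y : Matrix (Fin n) (Fin 1) ℝ)
    (hA : IsUnit A.det) (hAsymm : A.IsSymm)
    (hK : IsUnit (Matrix.fromBlocks A Bᵀ B D).det)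
    (hSchur : IsUnit (D - B * A⁻¹ * Bᵀ).det)
    (σst : Fin p → ℝ) (hσ : ∀ i, 0 ≤ σst i)
    (u : Ω → Matrix (Fin p) (Fin 1) ℝ)
    (yst : Ω → Matrix (Fin p) (Fin 1) ℝ)
    (hyst : ∀ ω, yst ω = B * A⁻¹ * y + u ω)
    (hu_int : ∀ i : Fin p, Integrable fun ω => u ω i 0)
    (hu_abs : ∀ i : Fin p, ∫ ω, |u ω i 0| = Real.sqrt (2 / Real.pi) * σst i) :
    haveI : Nonempty (Fin p) := ⟨⟨0, hp⟩⟩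
    (∫ ω, |(P * A⁻¹ * y -
        Matrix.fromCols P kst * (Matrix.fromBlocks A Bᵀ B D)⁻¹ *
          Matrix.fromRows y (yst ω)) 0 0|) ≤
      (Finset.univ.sup' Finset.univ_nonempty fun i : Fin p =>
          |((P * A⁻¹ * Bᵀ - kst) * (D - B * A⁻¹ * Bᵀ)⁻¹) 0 i|) *
        (Real.sqrt (2 / Real.pi) * ∑ i, σst i) := by
  haveI : Nonempty (Fin p) := ⟨⟨0, hp⟩⟩
  set c : Fin p → ℝ := fun i => ((P * A⁻¹ * Bᵀ - kst) * (D - B * A⁻¹ * Bᵀ)⁻¹) 0 i with hc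
  set M : ℝ := Finset.univ.sup' Finset.univ_nonempty fun i : Fin p => |c i| with hM
  have hMle : ∀ i, |c i| ≤ M := fun i => Finset.le_sup' (fun j => |c j|) (Finset.mem_univ i)
  have hM0 : 0 ≤ M := le_trans (abs_nonneg _) (hMle (Classical.arbitrary _))
  -- rewrite the integrand
  have hval : ∀ ω, (P * A⁻¹ * y -
        Matrix.fromCols P kst * (Matrix.fromBlocks A Bᵀ B D)⁻¹ *
          Matrix.fromRows y (yst ω)) 0 0 = ∑ i, c i * u ω i 0 := by
    intro ω
    rw [hyst ω, gp_mean_change_eq A B D P kst y (u ω) hA hSchur, Matrix.mul_apply]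
  -- bound the integral
  have hbound : ∀ ω, |∑ i, c i * u ω i 0| ≤ ∑ i, |c i| * |u ω i 0| := by
    intro ω
    refine (Finset.abs_sum_le_sum_abs _ _).trans ?_
    simp [abs_mul, le_refl]
  have hint : Integrable fun ω => ∑ i, |c i| * |u ω i 0| :=
    integrable_finset_sum _ fun i _ => ((hu_int i).abs.const_mul _)
  calc ∫ ω, |(P * A⁻¹ * y -
        Matrix.fromCols P kst * (Matrix.fromBlocks A Bᵀ B D)⁻¹ *
          Matrix.fromRows y (yst ω)) 0 0|
      = ∫ ω, |∑ i, c i * u ω i 0| := by simp_rw [hval]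
    _ ≤ ∫ ω, ∑ i, |c i| * |u ω i 0| := by
        refine integral_mono ?_ hint hbound
        have : Integrable fun ω => ∑ i, c i * u ω i 0 :=
          integrable_finset_sum _ fun i _ => ((hu_int i).const_mul _)
        exact this.abs
    _ = ∑ i, |c i| * (Real.sqrt (2 / Real.pi) * σst i) := by
        rw [integral_finset_sum _ fun i _ => ((hu_int i).abs.const_mul _)]
        refine Finset.sum_congr rfl fun i _ => ?_
        rw [MeasureTheory.integral_const_mul, hu_abs i]
    _ ≤ ∑ i, M * (Real.sqrt (2 / Real.pi) * σst i) := by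
        refine Finset.sum_le_sum fun i _ => ?_
        exact mul_le_mul_of_nonneg_right (hMle i)
          (mul_nonneg (Real.sqrt_nonneg _) (hσ i))
    _ = M * (Real.sqrt (2 / Real.pi) * ∑ i, σst i) := by
        rw [← Finset.mul_sum, ← Finset.mul_sum]
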